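/- For every integer k ≥ 2, the Bell numbers of order k satisfy the condition (3.1): limsup_{n→∞} ( b_k(n)·n! · inf_{x>0} H(x)/xⁿ )^{1/n} < ∞, where H(x) = Σ_{n≥0} xⁿ/(b_k(n)·n!) (this series converges for every real x). -/

import Mathlib

open scoped Nat

/-- The `k`-times iterated exponential function: `expIter 0 = id`,
`expIter (k+1) x = exp (expIter k x)`. -/
noncomputable def expIter : ℕ → ℝ → ℝ
  | 0 => id
  | k + 1 => fun x => Real.exp (expIter k x)

/-- `BellB k n` is the `n`-th derivative of the `k`-times iterated exponential at `0`,
so that `expIter k x = ∑ n, BellB k n * x ^ n / n !`. -/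
noncomputable def BellB (k n : ℕ) : ℝ := iteratedDeriv n (expIter k) 0

/-- The Bell numbers of order `k`: `bellOrd k n = BellB k n / expIter k 0`. -/
noncomputable def bellOrd (k n : ℕ) : ℝ := BellB k n / expIter k 0

section Aux
open scoped NNReal ENNReal

lemma hasSum_exp' (x : ℝ) : HasSum (fun n : ℕ => x ^ n / n !) (Real.exp x) := by
  rw [Real.exp_eq_exp_ℝ]; exact NormedSpace.expSeries_div_hasSum_exp x

lemma pow_le_factorial_mul_exp {x : ℝ} (hx : 0 ≤ x) (n : ℕ) :
    x ^ n ≤ n ! * Real.exp x := by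
  have h := le_hasSum (hasSum_exp' x) n (fun m _ => by positivity)
  have hn : (0:ℝ) < n ! := by positivity
  calc x ^ n = n ! * (x ^ n / n !) := by field_simp
  _ ≤ n ! * Real.exp x := by nlinarith

lemma tsum_pi_prod {ι : Type} (G : ι → ℝ≥0∞) :
    ∀ n : ℕ, ∑' v : Fin n → ι, ∏ j, G (v j) = (∑' i, G i) ^ n := by
  intro n
  induction n with
  | zero =>
      haveI : Unique (Fin 0 → ι) := ⟨⟨Fin.elim0⟩, fun f => funext fun j => j.elim0⟩
      simp [tsum_eq_single (default : Fin 0 → ι) (fun b hb => absurd (Subsingleton.elim b default) hb)]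
  | succ n ih =>
      rw [← Equiv.tsum_eq (Fin.consEquiv (fun _ : Fin (n + 1) => ι)) (fun v => ∏ j, G (v j))]
      have : ∀ p : ι × (Fin n → ι),
          (∏ j, G (((Fin.consEquiv (fun _ : Fin (n + 1) => ι)) p) j)) = G p.1 * ∏ j, G (p.2 j) := by
        intro p
        rw [Fin.prod_univ_succ]
        simp [Fin.consEquiv]
      simp_rw [this]
      rw [ENNReal.tsum_prod']
      simp_rw [ENNReal.tsum_mul_left]
      rw [ENNReal.tsum_mul_right, ih, pow_succ]
      ring


lemma hasSum_list_exp {ι : Type} (f : ι → ℝ) (hf : ∀ i, 0 ≤ f i) {S : ℝ}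
    (h : HasSum f S) :
    HasSum (fun l : List ι => (l.map f).prod / (l.length)!) (Real.exp S) := by
  set g : ι → ℝ≥0 := fun i => ⟨f i, hf i⟩ with hg
  have hS0 : 0 ≤ S := h.nonneg hf
  set T : ℝ≥0 := ⟨S, hS0⟩ with hT
  have hgT : HasSum g T := by rw [← NNReal.hasSum_coe]; exact h
  set Fg : List ι → ℝ≥0 := fun l => (l.map g).prod / ((l.length)! : ℝ≥0) with hFg
  have hcoe : ∀ l : List ι, ((Fg l : ℝ≥0) : ℝ) = (l.map f).prod / ((l.length)! : ℝ) := by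
    intro l
    rw [hFg]
    push_cast [NNReal.coe_list_prod, List.map_map]
    rfl
  -- the exp series in ℝ≥0
  set c : ℝ≥0 := ⟨Real.exp S, (Real.exp_pos S).le⟩ with hc
  have hexpc : HasSum (fun n : ℕ => T ^ n / (n ! : ℝ≥0)) c := by
    rw [← NNReal.hasSum_coe]
    push_cast
    exact hasSum_exp' S
  -- ENNReal computation
  have hENN : ∑' l : List ι, (Fg l : ℝ≥0∞) = (c : ℝ≥0∞) := by
    rw [← Equiv.tsum_eq (List.equivSigmaTuple (α := ι)).symm (fun l => (Fg l : ℝ≥0∞))]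
    have hterm : ∀ p : Σ n, Fin n → ι,
        ((Fg ((List.equivSigmaTuple (α := ι)).symm p) : ℝ≥0∞)) = (∏ j, (g (p.2 j) : ℝ≥0∞)) / ((p.1)! : ℝ≥0∞) := by
      rintro ⟨n, v⟩
      have hsymm : (List.equivSigmaTuple (α := ι)).symm ⟨n, v⟩ = List.ofFn v := rfl
      have h1 : Fg ((List.equivSigmaTuple (α := ι)).symm ⟨n, v⟩) = (∏ j, g (v j)) / ((n)! : ℝ≥0) := by
        rw [hsymm]
        simp only [hFg, List.map_ofFn, List.length_ofFn]
        congr 1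
        rw [List.prod_ofFn]
        rfl
      rw [h1, ENNReal.coe_div (by exact_mod_cast (Nat.factorial_pos n).ne'),
        ENNReal.coe_finset_prod]
      norm_cast
    rw [tsum_congr hterm, ENNReal.tsum_sigma']
    have hinner : ∀ n : ℕ, ∑' v : Fin n → ι, ((∏ j, (g (v j) : ℝ≥0∞)) / ((n)! : ℝ≥0∞))
        = ((T : ℝ≥0∞)) ^ n / ((n)! : ℝ≥0∞) := by
      intro n
      simp_rw [div_eq_mul_inv, ENNReal.tsum_mul_right]
      rw [tsum_pi_prod (fun i => (g i : ℝ≥0∞)) n, ENNReal.tsum_coe_eq hgT]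
    rw [tsum_congr hinner]
    have : ∀ n : ℕ, ((T : ℝ≥0∞)) ^ n / ((n)! : ℝ≥0∞) = ((T ^ n / (n ! : ℝ≥0) : ℝ≥0) : ℝ≥0∞) := by
      intro n
      rw [ENNReal.coe_div (by exact_mod_cast (Nat.factorial_pos n).ne')]
      norm_cast
    rw [tsum_congr this, ENNReal.tsum_coe_eq hexpc]
  -- back to ℝ
  have hsum : Summable Fg := by
    rw [← ENNReal.tsum_coe_ne_top_iff_summable, hENN]; exact ENNReal.coe_ne_top
  have htsum : ∑' l, Fg l = c := by
    have := ENNReal.coe_tsum hsum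
    rw [hENN] at this
    exact_mod_cast this
  have : HasSum Fg c := htsum ▸ hsum.hasSum
  have hR : HasSum (fun l : List ι => ((Fg l : ℝ≥0) : ℝ)) ((c : ℝ≥0) : ℝ) :=
    NNReal.hasSum_coe.2 this
  rw [show ((c : ℝ≥0) : ℝ) = Real.exp S from rfl] at hR
  simpa [hcoe] using hR



def MomRep (k : ℕ) : Prop :=
  ∃ (ι : Type) (w lam : ι → ℝ),
    (∀ i, 0 ≤ w i) ∧ (∀ i, 0 ≤ lam i) ∧ (∃ i, 0 < w i ∧ 1 ≤ lam i) ∧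
    ∀ x : ℝ, HasSum (fun i => w i * Real.exp (lam i * x)) (expIter k x)

lemma momRep_succ (k : ℕ) (hk : 1 ≤ k) (h : MomRep k) : MomRep (k + 1) := by
  obtain ⟨ι, w, lam, hw, hlam, ⟨i0, hw0, hl0⟩, hrep⟩ := h
  refine ⟨List ι, fun l => (l.map w).prod / ((l.length)! : ℝ),
    fun l => (l.map lam).sum, ?_, ?_, ⟨[i0], ?_, ?_⟩, ?_⟩
  · intro l
    apply div_nonneg _ (by positivity)
    apply List.prod_nonneg
    intro a ha
    obtain ⟨i, _, rfl⟩ := List.mem_map.1 ha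
    exact hw i
  · intro l
    apply List.sum_nonneg
    intro a ha
    obtain ⟨i, _, rfl⟩ := List.mem_map.1 ha
    exact hlam i
  · simpa using hw0
  · simpa using hl0
  · intro x
    have key := hasSum_list_exp (fun i => w i * Real.exp (lam i * x))
      (fun i => mul_nonneg (hw i) (Real.exp_pos _).le) (hrep x)
    have heq : ∀ l : List ι,
        (l.map fun i => w i * Real.exp (lam i * x)).prod / ((l.length)! : ℝ)
          = (l.map w).prod / ((l.length)! : ℝ) * Real.exp ((l.map lam).sum * x) := by
      intro l
      have : (l.map fun i => w i * Real.exp (lam i * x)).prod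
          = (l.map w).prod * Real.exp ((l.map lam).sum * x) := by
        induction l with
        | nil => simp
        | cons a l ih =>
            simp only [List.map_cons, List.prod_cons, List.sum_cons, ih, add_mul, Real.exp_add]
            ring
      rw [this]; ring
    have : expIter (k + 1) x = Real.exp (expIter k x) := rfl
    rw [this]
    exact (funext heq : _) ▸ key
lemma momRep (k : ℕ) (hk : 1 ≤ k) : MomRep k := by
  obtain ⟨m, rfl⟩ : ∃ m, k = m + 1 := ⟨k - 1, by omega⟩
  clear hk
  induction m with
  | zero =>
      refine ⟨Unit, fun _ => 1, fun _ => 1, fun _ => zero_le_one, fun _ => zero_le_one,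
        ⟨(), one_pos, le_refl 1⟩, fun x => ?_⟩
      have : expIter 1 x = Real.exp x := rfl
      rw [this]
      simpa using hasSum_fintype (fun _ : Unit => Real.exp x)
  | succ m ih => exact momRep_succ (m + 1) (by omega) ih



section Deriv
variable {ι : Type} {w lam : ι → ℝ}

lemma summable_aux {k : ℕ} (hw : ∀ i, 0 ≤ w i) (hlam : ∀ i, 0 ≤ lam i)
    (hrep : ∀ x : ℝ, HasSum (fun i => w i * Real.exp (lam i * x)) (expIter k x))
    (n : ℕ) (c : ℝ) : Summable (fun i => w i * lam i ^ n * Real.exp (lam i * c)) := by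
  refine Summable.of_nonneg_of_le (fun i => by have := hw i; have := hlam i; positivity)
    (fun i => ?_) (((hrep (c + 1)).summable).mul_left (n ! : ℝ))
  have h1 : lam i ^ n ≤ n ! * Real.exp (lam i) := pow_le_factorial_mul_exp (hlam i) n
  have h2 : Real.exp (lam i) * Real.exp (lam i * c) = Real.exp (lam i * (c + 1)) := by
    rw [← Real.exp_add]; ring_nf
  calc w i * lam i ^ n * Real.exp (lam i * c)
      ≤ w i * (n ! * Real.exp (lam i)) * Real.exp (lam i * c) :=
        mul_le_mul_of_nonneg_right (mul_le_mul_of_nonneg_left h1 (hw i))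
          (Real.exp_pos _).le
    _ = (n ! : ℝ) * (w i * Real.exp (lam i * (c + 1))) := by rw [← h2]; ring

lemma hasSum_iteratedDeriv {k : ℕ} (hw : ∀ i, 0 ≤ w i) (hlam : ∀ i, 0 ≤ lam i)
    (hrep : ∀ x : ℝ, HasSum (fun i => w i * Real.exp (lam i * x)) (expIter k x)) (n : ℕ) :
    ∀ x : ℝ, HasSum (fun i => w i * lam i ^ n * Real.exp (lam i * x))
      (iteratedDeriv n (expIter k) x) := by
  induction n with
  | zero => intro x; simpa using hrep x
  | succ n ih =>
      intro x
      have hmem : x ∈ Set.Ioo (-(|x| + 1)) (|x| + 1) := by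
        rw [Set.mem_Ioo]; exact abs_lt.1 (lt_add_one _)
      have hg : ∀ (i : ι) (y : ℝ), y ∈ Set.Ioo (-(|x| + 1)) (|x| + 1) →
          HasDerivAt (fun z => w i * lam i ^ n * Real.exp (lam i * z))
            (w i * lam i ^ (n + 1) * Real.exp (lam i * y)) y := by
        intro i y _
        have h1 : HasDerivAt (fun z : ℝ => lam i * z) (lam i) y := by
          simpa using (hasDerivAt_id y).const_mul (lam i)
        have h2 := (h1.exp).const_mul (w i * lam i ^ n)
        rw [show w i * lam i ^ (n + 1) * Real.exp (lam i * y)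
            = w i * lam i ^ n * (Real.exp (lam i * y) * lam i) by ring]
        exact h2
      have hg' : ∀ (i : ι) (y : ℝ), y ∈ Set.Ioo (-(|x| + 1)) (|x| + 1) →
          ‖w i * lam i ^ (n + 1) * Real.exp (lam i * y)‖ ≤
            w i * lam i ^ (n + 1) * Real.exp (lam i * (|x| + 1)) := by
        intro i y hy
        have hle : Real.exp (lam i * y) ≤ Real.exp (lam i * (|x| + 1)) :=
          Real.exp_le_exp.2 (mul_le_mul_of_nonneg_left hy.2.le (hlam i))
        have hnn : 0 ≤ w i * lam i ^ (n + 1) := by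
          have := hw i; have := hlam i; positivity
        rw [Real.norm_eq_abs, abs_of_nonneg (mul_nonneg hnn (Real.exp_pos _).le)]
        exact mul_le_mul_of_nonneg_left hle hnn
      have key : HasDerivAt (fun z => ∑' i, w i * lam i ^ n * Real.exp (lam i * z))
          (∑' i, w i * lam i ^ (n + 1) * Real.exp (lam i * x)) x :=
        hasDerivAt_tsum_of_isPreconnected
          (summable_aux hw hlam hrep (n + 1) (|x| + 1)) isOpen_Ioo isPreconnected_Ioo
          hg hg' hmem (summable_aux hw hlam hrep n x) hmem
      have hfun : iteratedDeriv n (expIter k)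
          = fun z => ∑' i, w i * lam i ^ n * Real.exp (lam i * z) :=
        funext fun z => ((ih z).tsum_eq).symm
      rw [iteratedDeriv_succ, hfun, key.deriv]
      exact (summable_aux hw hlam hrep (n + 1) x).hasSum
end Deriv


lemma tsum_cauchy_schwarz {ι : Type} (f g : ι → ℝ)
    (hf2 : Summable (fun i => f i ^ 2)) (hg2 : Summable (fun i => g i ^ 2))
    (hfg : Summable (fun i => f i * g i)) :
    (∑' i, f i * g i) ^ 2 ≤ (∑' i, f i ^ 2) * (∑' i, g i ^ 2) := by
  have ht : Filter.Tendsto (fun s : Finset ι => (∑ i ∈ s, f i * g i) ^ 2)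
      Filter.atTop (nhds ((∑' i, f i * g i) ^ 2)) := (hfg.hasSum).pow 2
  refine le_of_tendsto ht (Filter.Eventually.of_forall fun s => ?_)
  refine le_trans (Finset.sum_mul_sq_le_sq_mul_sq s f g) ?_
  have h1 : ∑ i ∈ s, f i ^ 2 ≤ ∑' i, f i ^ 2 :=
    Summable.sum_le_tsum s (fun i _ => sq_nonneg _) hf2
  have h2 : ∑ i ∈ s, g i ^ 2 ≤ ∑' i, g i ^ 2 :=
    Summable.sum_le_tsum s (fun i _ => sq_nonneg _) hg2
  exact mul_le_mul h1 h2 (Finset.sum_nonneg fun i _ => sq_nonneg _)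
    (tsum_nonneg fun i => sq_nonneg _)


lemma analytic_main (A : ℕ → ℝ) (δ : ℝ) (hδ : 0 < δ) (hA : ∀ n, 0 < A n)
    (hlb : ∀ n, δ * n ! ≤ A n)
    (hconv : ∀ n, A (n + 1) ^ 2 ≤ A n * A (n + 2)) :
    (∀ x : ℝ, Summable fun n : ℕ => x ^ n / A n) ∧
    Filter.limsup (fun n : ℕ =>
      (((A n * ⨅ x : Set.Ioi (0 : ℝ),
        (∑' m : ℕ, (x : ℝ) ^ m / A m) / (x : ℝ) ^ n) ^ ((n : ℝ)⁻¹) : ℝ) : EReal))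
      Filter.atTop < ⊤ := by
  have hsummable : ∀ x : ℝ, Summable fun n : ℕ => x ^ n / A n := by
    intro x
    have hb : Summable (fun n : ℕ => (1 / δ) * (|x| ^ n / n !)) :=
      (Real.summable_pow_div_factorial |x|).mul_left _
    refine Summable.of_abs (Summable.of_nonneg_of_le (fun n => abs_nonneg _)
      (fun n => ?_) hb)
    rw [abs_div, abs_pow, abs_of_pos (hA n)]
    have hr : (1 / δ) * (|x| ^ n / n !) = |x| ^ n / (δ * n !) := by
      field_simp
    rw [hr]
    have h1 : δ * n ! ≤ A n := hlb n
    have h2 : (0:ℝ) < δ * n ! := by positivity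
    exact div_le_div_of_nonneg_left (by positivity) h2 h1
  -- nonnegativity of the infimum quotients
  have hquot : ∀ (n : ℕ) (x : Set.Ioi (0:ℝ)),
      0 ≤ (∑' m : ℕ, (x : ℝ) ^ m / A m) / (x : ℝ) ^ n := by
    intro n x
    have hx : (0:ℝ) < (x : ℝ) := x.2
    have h1 : 0 ≤ ∑' m : ℕ, (x : ℝ) ^ m / A m :=
      tsum_nonneg fun m => div_nonneg (by positivity) (hA m).le
    positivity
  have hbdd : ∀ n : ℕ, BddBelow (Set.range fun x : Set.Ioi (0:ℝ) =>
      (∑' m : ℕ, (x : ℝ) ^ m / A m) / (x : ℝ) ^ n) := by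
    intro n
    exact ⟨0, by rintro _ ⟨x, rfl⟩; exact hquot n x⟩
  have hI0 : ∀ n : ℕ, 0 ≤ ⨅ x : Set.Ioi (0:ℝ), (∑' m : ℕ, (x : ℝ) ^ m / A m) / (x : ℝ) ^ n :=
    fun n => le_ciInf (hquot n)
  -- the ratio sequence
  set ρ : ℕ → ℝ := fun n => A n / A (n + 1) with hρ
  have hρpos : ∀ n, 0 < ρ n := fun n => div_pos (hA n) (hA (n + 1))
  have hanti : Antitone ρ := by
    apply antitone_nat_of_succ_le
    intro n
    rw [hρ]
    rw [div_le_div_iff₀ (hA (n + 2)) (hA (n + 1))]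
    nlinarith [hconv n]
  -- main bound
  have keybound : ∀ n : ℕ, 1 ≤ n →
      A n * (⨅ x : Set.Ioi (0:ℝ), (∑' m : ℕ, (x : ℝ) ^ m / A m) / (x : ℝ) ^ n)
        ≤ 2 ^ (n + 1) := by
    intro n hn
    set x : ℝ := A (n + 1) / (2 * A n) with hxdef
    have hx : 0 < x := by
      rw [hxdef]
      exact div_pos (hA (n + 1)) (by linarith [hA n])
    have h2x : 2 * x = A (n + 1) / A n := by
      rw [hxdef]
      have h3 := (hA n).ne'
      field_simp
    set u : ℕ → ℝ := fun m => (2 * x) ^ m / A m with hu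
    have hupos : ∀ m, 0 < u m := fun m => div_pos (pow_pos (by linarith : (0:ℝ) < 2 * x) m) (hA m)
    have hurec : ∀ m, u (m + 1) = u m * (ρ m / ρ n) := by
      intro m
      rw [hu, hρ]
      simp only
      rw [pow_succ, h2x]
      have h1 := (hA m).ne'
      have h2 := (hA (m + 1)).ne'
      have h3 := (hA n).ne'
      have h4 := (hA (n + 1)).ne'
      field_simp
    have step_up : ∀ m, m < n → u m ≤ u (m + 1) := by
      intro m hm
      rw [hurec m]
      have h1 : ρ n ≤ ρ m := hanti hm.le
      have h2 : 1 ≤ ρ m / ρ n := (one_le_div (hρpos n)).2 h1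
      exact le_mul_of_one_le_right (hupos m).le h2
    have hup : ∀ m, m ≤ n → u m ≤ u n := by
      have key : ∀ d : ℕ, u (n - d) ≤ u n := by
        intro d
        induction d with
        | zero => simp
        | succ d ih =>
            rcases le_or_gt n d with h | h
            · have : n - (d + 1) = n - d := by omega
              rw [this]; exact ih
            · have h1 : n - (d + 1) < n := by omega
              have h2 : n - (d + 1) + 1 = n - d := by omega
              calc u (n - (d + 1)) ≤ u (n - (d + 1) + 1) := step_up _ h1
                _ = u (n - d) := by rw [h2]
                _ ≤ u n := ih
      intro m hm
      have := key (n - m)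
      rwa [Nat.sub_sub_self hm] at this
    have hdown : ∀ m, n ≤ m → u m ≤ u n := by
      intro m hm
      induction m, hm using Nat.le_induction with
      | base => exact le_refl _
      | succ m hm ih =>
          rw [hurec m]
          have h1 : ρ m ≤ ρ n := hanti hm
          have h2 : ρ m / ρ n ≤ 1 := (div_le_one (hρpos n)).2 h1
          exact le_trans (mul_le_of_le_one_right (hupos m).le h2) ih
    have humax : ∀ m, u m ≤ u n := by
      intro m
      rcases le_or_gt m n with h | h
      · exact hup m h
      · exact hdown m h.le
    -- pointwise bound on terms
    have hpt : ∀ m : ℕ, x ^ m / A m ≤ u n * (1 / 2) ^ m := by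
      intro m
      have he : u m * (1 / 2 : ℝ) ^ m = x ^ m / A m := by
        rw [hu]
        simp only
        rw [div_mul_eq_mul_div, ← mul_pow]
        have h5 : 2 * x * (1 / 2 : ℝ) = x := by ring
        rw [h5]
      rw [← he]
      exact mul_le_mul_of_nonneg_right (humax m) (by positivity)
    -- sum bound
    have hsum : (∑' m : ℕ, x ^ m / A m) ≤ u n * 2 := by
      have h1 : (∑' m : ℕ, x ^ m / A m) ≤ ∑' m : ℕ, u n * (1 / 2 : ℝ) ^ m :=
        Summable.tsum_le_tsum hpt (hsummable x) ((summable_geometric_two).mul_left _)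
      rw [tsum_mul_left, tsum_geometric_two] at h1
      exact h1
    -- infimum bound
    have hinf : (⨅ y : Set.Ioi (0:ℝ), (∑' m : ℕ, (y : ℝ) ^ m / A m) / (y : ℝ) ^ n)
        ≤ (∑' m : ℕ, x ^ m / A m) / x ^ n :=
      ciInf_le (hbdd n) (⟨x, hx⟩ : Set.Ioi (0:ℝ))
    have hdiv : (∑' m : ℕ, x ^ m / A m) / x ^ n ≤ 2 ^ (n + 1) / A n := by
      have hxn : (0:ℝ) < x ^ n := pow_pos hx n
      rw [div_le_div_iff₀ hxn (hA n)]
      have : u n * 2 = 2 ^ (n + 1) * x ^ n / A n := by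
        rw [hu]
        simp only
        rw [mul_pow, pow_succ]
        ring
      calc (∑' m : ℕ, x ^ m / A m) * A n ≤ u n * 2 * A n :=
            mul_le_mul_of_nonneg_right hsum (hA n).le
        _ = 2 ^ (n + 1) * x ^ n / A n * A n := by rw [this]
        _ = 2 ^ (n + 1) * x ^ n := div_mul_cancel₀ _ (hA n).ne'
    calc A n * (⨅ y : Set.Ioi (0:ℝ), (∑' m : ℕ, (y : ℝ) ^ m / A m) / (y : ℝ) ^ n)
        ≤ A n * (2 ^ (n + 1) / A n) :=
          mul_le_mul_of_nonneg_left (le_trans hinf hdiv) (hA n).le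
      _ = 2 ^ (n + 1) := by rw [mul_comm, div_mul_cancel₀ _ (hA n).ne']
  -- eventual bound by 8
  have hev : ∀ n : ℕ, 1 ≤ n →
      ((A n * ⨅ x : Set.Ioi (0:ℝ), (∑' m : ℕ, (x : ℝ) ^ m / A m) / (x : ℝ) ^ n)
        ^ ((n : ℝ)⁻¹) : ℝ) ≤ 8 := by
    intro n hn
    have h0 : 0 ≤ A n * ⨅ x : Set.Ioi (0:ℝ), (∑' m : ℕ, (x : ℝ) ^ m / A m) / (x : ℝ) ^ n :=
      mul_nonneg (hA n).le (hI0 n)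
    have h1 := keybound n hn
    have h2 : (2:ℝ) ^ (n + 1) ≤ 8 ^ n := by
      have e : (8:ℝ) ^ n = 2 ^ (3 * n) := by
        rw [pow_mul]; norm_num
      rw [e]
      exact pow_le_pow_right₀ (by norm_num) (by omega)
    have h3 := Real.rpow_le_rpow h0 (h1.trans h2) (by positivity : (0:ℝ) ≤ (n:ℝ)⁻¹)
    have h4 : ((8:ℝ) ^ n) ^ ((n : ℝ)⁻¹) = 8 := by
      rw [← Real.rpow_natCast 8 n, ← Real.rpow_mul (by norm_num : (0:ℝ) ≤ 8),
        mul_inv_cancel₀ (by exact_mod_cast Nat.one_le_iff_ne_zero.1 hn : (n:ℝ) ≠ 0),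
        Real.rpow_one]
    calc _ ≤ ((8:ℝ) ^ n) ^ ((n : ℝ)⁻¹) := h3
      _ = 8 := h4
  refine ⟨hsummable, lt_of_le_of_lt ?_ (EReal.coe_lt_top 8)⟩
  apply Filter.limsup_le_of_le
  · isBoundedDefault
  · exact Filter.eventually_atTop.2 ⟨1, fun n hn => EReal.coe_le_coe_iff.2 (hev n hn)⟩


lemma expIter_pos {k : ℕ} (hk : 1 ≤ k) (x : ℝ) : 0 < expIter k x := by
  obtain ⟨m, rfl⟩ : ∃ m, k = m + 1 := ⟨k - 1, by omega⟩
  exact Real.exp_pos _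

end Aux

/-- For every integer `k ≥ 2`, the Bell numbers of order `k` satisfy condition (3.1):
the series `H x = ∑_{n≥0} x^n / (bellOrd k n * n!)` converges for every real `x`, and
`limsup_{n→∞} (bellOrd k n * n! * inf_{x>0} H x / x^n)^(1/n) < ∞`. -/
theorem bellOrd_test_condition (k : ℕ) (hk : 2 ≤ k) :
    (∀ x : ℝ, Summable fun n : ℕ => x ^ n / (bellOrd k n * (n ! : ℝ))) ∧
    Filter.limsup
      (fun n : ℕ =>
        (((bellOrd k n * (n ! : ℝ) *
          ⨅ x : Set.Ioi (0 : ℝ),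
            (∑' m : ℕ, (x : ℝ) ^ m / (bellOrd k m * (m ! : ℝ))) / (x : ℝ) ^ n) ^
              ((n : ℝ)⁻¹) : ℝ) : EReal))
      Filter.atTop < ⊤ := by
  obtain ⟨ι, w, lam, hw, hlam, ⟨i0, hw0, hl0⟩, hrep⟩ := momRep k (by omega)
  have hE : (0:ℝ) < expIter k 0 := expIter_pos (by omega) 0
  set E : ℝ := expIter k 0 with hEdef
  -- summability of the moment sums
  have hBsum : ∀ n : ℕ, Summable (fun i => w i * lam i ^ n) := by
    intro n
    have := summable_aux hw hlam hrep n 0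
    simpa using this
  -- Bell numbers as moments
  have hB : ∀ n : ℕ, HasSum (fun i => w i * lam i ^ n) (BellB k n) := by
    intro n
    have := hasSum_iteratedDeriv hw hlam hrep n 0
    simpa [BellB] using this
  -- positivity
  have hBge : ∀ n : ℕ, w i0 ≤ BellB k n := by
    intro n
    have h1 : w i0 * 1 ≤ w i0 * lam i0 ^ n :=
      mul_le_mul_of_nonneg_left (one_le_pow₀ hl0) (hw i0)
    have h2 : w i0 * lam i0 ^ n ≤ BellB k n := by
      rw [← (hB n).tsum_eq]
      exact Summable.le_tsum (hBsum n) i0 (fun j _ => by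
        have := hw j; have := hlam j; positivity)
    calc w i0 = w i0 * 1 := (mul_one _).symm
      _ ≤ w i0 * lam i0 ^ n := h1
      _ ≤ BellB k n := h2
  have hBpos : ∀ n : ℕ, 0 < BellB k n := fun n => lt_of_lt_of_le hw0 (hBge n)
  -- log-convexity of BellB via Cauchy-Schwarz
  have hCS : ∀ n : ℕ, BellB k (n + 1) ^ 2 ≤ BellB k n * BellB k (n + 2) := by
    intro n
    set f : ι → ℝ := fun i => Real.sqrt (w i * lam i ^ n) with hf
    set g : ι → ℝ := fun i => Real.sqrt (w i * lam i ^ (n + 2)) with hgdef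
    have hf2 : ∀ i, f i ^ 2 = w i * lam i ^ n := fun i =>
      Real.sq_sqrt (by have := hw i; have := hlam i; positivity)
    have hg2 : ∀ i, g i ^ 2 = w i * lam i ^ (n + 2) := fun i =>
      Real.sq_sqrt (by have := hw i; have := hlam i; positivity)
    have hfg : ∀ i, f i * g i = w i * lam i ^ (n + 1) := by
      intro i
      have hwi := hw i; have hli := hlam i
      rw [hf, hgdef]
      rw [← Real.sqrt_mul (by positivity)]
      have : w i * lam i ^ n * (w i * lam i ^ (n + 2)) = (w i * lam i ^ (n + 1)) ^ 2 := by
        ring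
      rw [this, Real.sqrt_sq (by positivity)]
    have h := tsum_cauchy_schwarz f g
      (by simp_rw [hf2]; exact hBsum n)
      (by simp_rw [hg2]; exact hBsum (n + 2))
      (by simp_rw [hfg]; exact hBsum (n + 1))
    simp_rw [hfg, hf2, hg2] at h
    rwa [(hB (n + 1)).tsum_eq, (hB n).tsum_eq, (hB (n + 2)).tsum_eq] at h
  -- apply the analytic lemma
  have hfact2 : ∀ n : ℕ, (((n + 1)! : ℝ)) ^ 2 ≤ (n ! : ℝ) * ((n + 2)! : ℝ) := by
    intro n
    have h1 : ((n + 1)! : ℝ) = (n + 1) * n ! := by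
      rw [Nat.factorial_succ]; push_cast; ring
    have h2 : ((n + 2)! : ℝ) = (n + 2) * ((n + 1) * n !) := by
      rw [Nat.factorial_succ, Nat.factorial_succ]; push_cast; ring
    have h3 : (0:ℝ) < n ! := by positivity
    have h4 : (0:ℝ) ≤ (n:ℝ) := Nat.cast_nonneg n
    rw [h1, h2]
    nlinarith
  refine analytic_main (fun n => bellOrd k n * (n ! : ℝ)) (w i0 / E) (div_pos hw0 hE)
    (fun n => ?_) (fun n => ?_) (fun n => ?_)
  · have := hBpos n
    simp only [bellOrd, ← hEdef]
    positivity
  · simp only [bellOrd, ← hEdef]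
    have h1 : w i0 / E ≤ BellB k n / E := by gcongr; exact hBge n
    have h2 : (0:ℝ) ≤ (n ! : ℝ) := by positivity
    calc w i0 / E * n ! ≤ BellB k n / E * n ! := mul_le_mul_of_nonneg_right h1 h2
      _ = BellB k n / E * n ! := rfl
  · simp only [bellOrd, ← hEdef]
    have hkey : BellB k (n + 1) ^ 2 * (((n + 1)! : ℝ)) ^ 2
        ≤ (BellB k n * BellB k (n + 2)) * ((n ! : ℝ) * ((n + 2)! : ℝ)) := by
      have hl := hCS n
      have hr := hfact2 n
      have h1 : (0:ℝ) ≤ BellB k (n + 1) ^ 2 := sq_nonneg _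
      have h2 : (0:ℝ) ≤ (((n + 1)! : ℝ)) ^ 2 := sq_nonneg _
      nlinarith [hBpos n, hBpos (n + 2), sq_nonneg (((n+1)! : ℝ))]
    have hE2 : (0:ℝ) < E ^ 2 := by positivity
    have lhs_eq : (BellB k (n + 1) / E * ((n + 1)! : ℝ)) ^ 2
        = BellB k (n + 1) ^ 2 * (((n + 1)! : ℝ)) ^ 2 / E ^ 2 := by
      field_simp
    have rhs_eq : BellB k n / E * (n ! : ℝ) * (BellB k (n + 2) / E * ((n + 2)! : ℝ))
        = (BellB k n * BellB k (n + 2)) * ((n ! : ℝ) * ((n + 2)! : ℝ)) / E ^ 2 := by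
      field_simp
    rw [lhs_eq, rhs_eq]
    exact div_le_div_of_nonneg_right hkey hE2.le
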